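/- Let m = p + q with q ≥ 1. If F is a complex polynomial in m variables that is harmonic in the v-variables (Δ_v F = 0) and F = r²·Q for some polynomial Q, then F = 0. -/

import Mathlib

open MvPolynomial Finset

noncomputable section

/-- The full Laplacian `ΔP = ∑ ∂_i² P`. -/
def lap (m : ℕ) (P : MvPolynomial (Fin m) ℂ) : MvPolynomial (Fin m) ℂ :=
  ∑ i, pderiv i (pderiv i P)

/-- The polynomial `r² = ∑ X_i²`. -/
def r2 (m : ℕ) : MvPolynomial (Fin m) ℂ := ∑ i, X i ^ 2

/-- The Laplacian in the `u`-variables (the first `p` variables). -/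
def lapU (p q : ℕ) (F : MvPolynomial (Fin (p + q)) ℂ) : MvPolynomial (Fin (p + q)) ℂ :=
  ∑ i ∈ univ.filter (fun i : Fin (p + q) => (i : ℕ) < p), pderiv i (pderiv i F)

/-- The Laplacian in the `v`-variables (the last `q` variables). -/
def lapV (p q : ℕ) (F : MvPolynomial (Fin (p + q)) ℂ) : MvPolynomial (Fin (p + q)) ℂ :=
  ∑ i ∈ univ.filter (fun i : Fin (p + q) => p ≤ (i : ℕ)), pderiv i (pderiv i F)

/-- `|u|² = ∑_{i<p} X_i²`. -/
def u2 (p q : ℕ) : MvPolynomial (Fin (p + q)) ℂ :=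
  ∑ i ∈ univ.filter (fun i : Fin (p + q) => (i : ℕ) < p), X i ^ 2

/-- `|v|² = ∑_{i≥p} X_i²`. -/
def v2 (p q : ℕ) : MvPolynomial (Fin (p + q)) ℂ :=
  ∑ i ∈ univ.filter (fun i : Fin (p + q) => p ≤ (i : ℕ)), X i ^ 2

/-- The Fischer inner product `⟨P,Q⟩ = ∑_α (∏_i α_i!)·conj(coeff_α P)·coeff_α Q`. -/
def fischer (m : ℕ) (P Q : MvPolynomial (Fin m) ℂ) : ℂ :=
  ∑ α ∈ P.support, (∏ i, ((α i).factorial : ℂ)) * (starRingEnd ℂ) (coeff α P) * coeff α Q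


lemma coeff_pderiv' {σ R : Type*} [CommSemiring R] (i : σ) (P : MvPolynomial σ R) (d : σ →₀ ℕ) :
    coeff d (pderiv i P) = (d i + 1 : ℕ) * coeff (d + Finsupp.single i 1) P := by
  classical
  induction P using MvPolynomial.induction_on' with
  | add f g hf hg => simp [hf, hg, mul_add]
  | monomial s a =>
    rw [pderiv_monomial, coeff_monomial, coeff_monomial]
    split_ifs with h1 h2 h2
    · subst h2
      simp [mul_comm]
    · -- s - e_i = d but s ≠ d + e_i, so s i = 0
      have hsi : s i = 0 := by
        by_contra hsi
        apply h2
        ext j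
        have hj := congrArg (fun f => f j) h1
        simp only [Finsupp.coe_tsub, Pi.sub_apply, Finsupp.single_apply, Finsupp.add_apply] at hj ⊢
        by_cases hji : i = j
        · subst hji; simp at hj ⊢; omega
        · simp [hji] at hj ⊢; omega
      simp [hsi]
    · exfalso
      apply h1
      subst h2
      ext j
      simp [Finsupp.single_apply]
    · ring


section Aux
variable {p q : ℕ}

/-- the weight function: v-variables have weight 1, u-variables weight 0. -/
def ww (p q : ℕ) : Fin (p + q) → ℕ := fun i => if p ≤ (i : ℕ) then 1 else 0

lemma weight_add_single {i : Fin (p + q)} (hi : p ≤ (i : ℕ)) (d : Fin (p + q) →₀ ℕ) :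
    Finsupp.weight (ww p q) (d + Finsupp.single i 1) = Finsupp.weight (ww p q) d + 1 := by
  rw [map_add]
  congr 1
  rw [Finsupp.weight_apply, Finsupp.sum_single_index] <;> simp [ww, hi]

lemma comp_pderiv {i : Fin (p + q)} (hi : p ≤ (i : ℕ)) (n : ℕ)
    (P : MvPolynomial (Fin (p + q)) ℂ) :
    pderiv i (weightedHomogeneousComponent (ww p q) (n + 1) P) =
      weightedHomogeneousComponent (ww p q) n (pderiv i P) := by
  ext d
  rw [coeff_pderiv', coeff_weightedHomogeneousComponent, coeff_weightedHomogeneousComponent,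
    coeff_pderiv', weight_add_single hi]
  by_cases h : Finsupp.weight (ww p q) d = n
  · rw [if_pos h, if_pos (by omega)]
  · rw [if_neg h, if_neg (by omega), mul_zero]

lemma comp_mul_hom {A : MvPolynomial (Fin (p + q)) ℂ} {a : ℕ}
    (hA : IsWeightedHomogeneous (ww p q) A a) (n : ℕ) (P : MvPolynomial (Fin (p + q)) ℂ) :
    weightedHomogeneousComponent (ww p q) (n + a) (A * P) =
      A * weightedHomogeneousComponent (ww p q) n P := by
  conv_lhs => rw [← sum_weightedHomogeneousComponent (ww p q) P]
  rw [mul_finsum _ _]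
  have hfin : (Function.support fun m => A * weightedHomogeneousComponent (ww p q) m P).Finite :=
    Set.Finite.subset (weightedHomogeneousComponent_finsupp P) (by
      intro m hm
      simp only [Function.mem_support] at hm ⊢
      intro h0; apply hm; rw [h0, mul_zero])
  have hmap : (weightedHomogeneousComponent (ww p q) (n + a))
      (∑ᶠ m, A * weightedHomogeneousComponent (ww p q) m P) =
      ∑ᶠ m, (weightedHomogeneousComponent (ww p q) (n + a))
        (A * weightedHomogeneousComponent (ww p q) m P) :=
    AddMonoidHom.map_finsum (weightedHomogeneousComponent (ww p q) (n + a)).toAddMonoidHom hfin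
  rw [hmap]
  rw [finsum_eq_single _ n]
  · rcases eq_or_ne (A * weightedHomogeneousComponent (ww p q) n P) 0 with h0 | h0
    · rw [h0, map_zero]
    · exact IsWeightedHomogeneous.weightedHomogeneousComponent_same
        (by rw [add_comm n a]; exact hA.mul (weightedHomogeneousComponent_isWeightedHomogeneous n P))
  · intro m hm
    apply IsWeightedHomogeneous.weightedHomogeneousComponent_ne
    exact hA.mul (weightedHomogeneousComponent_isWeightedHomogeneous m P)
    omega

end Aux

section Fischer
variable {m : ℕ}

lemma fischer_eq_sum (P Q : MvPolynomial (Fin m) ℂ) (s : Finset (Fin m →₀ ℕ))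
    (hs : P.support ⊆ s) :
    fischer m P Q =
      ∑ α ∈ s, (∏ i, ((α i).factorial : ℂ)) * (starRingEnd ℂ) (coeff α P) * coeff α Q := by
  rw [fischer]
  apply Finset.sum_subset hs
  intro α _ hα
  rw [notMem_support_iff] at hα
  simp [hα]

lemma fischer_add_left (P1 P2 H : MvPolynomial (Fin m) ℂ) :
    fischer m (P1 + P2) H = fischer m P1 H + fischer m P2 H := by
  rw [fischer_eq_sum (P1 + P2) H (P1.support ∪ P2.support ∪ (P1 + P2).support)
      (by intro x hx; simp [hx]),
    fischer_eq_sum P1 H (P1.support ∪ P2.support ∪ (P1 + P2).support)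
      (by intro x hx; simp [hx]),
    fischer_eq_sum P2 H (P1.support ∪ P2.support ∪ (P1 + P2).support)
      (by intro x hx; simp [hx]),
    ← Finset.sum_add_distrib]
  apply Finset.sum_congr rfl
  intro α _
  rw [coeff_add, map_add]
  ring

lemma fischer_zero_left (H : MvPolynomial (Fin m) ℂ) : fischer m 0 H = 0 := by
  simp [fischer]

lemma fischer_zero_right (P : MvPolynomial (Fin m) ℂ) : fischer m P 0 = 0 := by
  simp [fischer]

lemma fischer_sum_left {ι : Type*} (s : Finset ι) (P : ι → MvPolynomial (Fin m) ℂ)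
    (H : MvPolynomial (Fin m) ℂ) :
    fischer m (∑ i ∈ s, P i) H = ∑ i ∈ s, fischer m (P i) H := by
  induction s using Finset.cons_induction with
  | empty => simp [fischer_zero_left]
  | cons a s ha ih =>
    rw [Finset.sum_cons, Finset.sum_cons, fischer_add_left, ih]

lemma fischer_sum_right {ι : Type*} (s : Finset ι) (P : MvPolynomial (Fin m) ℂ)
    (H : ι → MvPolynomial (Fin m) ℂ) :
    fischer m P (∑ i ∈ s, H i) = ∑ i ∈ s, fischer m P (H i) := by
  simp only [fischer, coeff_sum, Finset.mul_sum]
  rw [Finset.sum_comm]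

lemma fischer_X_mul (i : Fin m) (P H : MvPolynomial (Fin m) ℂ) :
    fischer m (X i * P) H = fischer m P (pderiv i H) := by
  classical
  have hs : (X i * P).support ⊆ P.support.image (· + Finsupp.single i 1) := by
    intro α hα
    rw [mem_support_iff, coeff_X_mul' α i P] at hα
    rw [Finset.mem_image]
    split_ifs at hα with hi
    · refine ⟨α - Finsupp.single i 1, mem_support_iff.mpr hα, ?_⟩
      rw [Finsupp.mem_support_iff] at hi
      ext j
      simp only [Finsupp.add_apply, Finsupp.coe_tsub, Pi.sub_apply, Finsupp.single_apply]
      by_cases hji : i = j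
      · subst hji; simp; omega
      · simp [hji]
    · exact absurd rfl hα
  rw [fischer_eq_sum _ _ _ hs,
    Finset.sum_image (by intro x _ y _ h; exact add_right_cancel h)]
  rw [fischer]
  apply Finset.sum_congr rfl
  intro β _
  have hcoeff : coeff (β + Finsupp.single i 1) (X i * P) = coeff β P := by
    rw [add_comm, coeff_X_mul]
  have hfac : (∏ j, (((β + Finsupp.single i 1 : Fin m →₀ ℕ) j).factorial : ℂ)) =
      ((β i + 1 : ℕ) : ℂ) * ∏ j, ((β j).factorial : ℂ) := by
    rw [← Finset.mul_prod_erase univ _ (mem_univ i), ← Finset.mul_prod_erase univ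
      (fun j => ((β j).factorial : ℂ)) (mem_univ i)]
    have h1 : ∀ j ∈ univ.erase i, (((β + Finsupp.single i 1 : Fin m →₀ ℕ) j).factorial : ℂ) =
        ((β j).factorial : ℂ) := by
      intro j hj
      rw [Finset.mem_erase] at hj
      simp [Finsupp.add_apply, Finsupp.single_apply, Ne.symm hj.1]
    rw [Finset.prod_congr rfl h1]
    have h2 : (β + Finsupp.single i 1 : Fin m →₀ ℕ) i = β i + 1 := by simp
    rw [h2, Nat.factorial_succ]
    push_cast
    ring
  rw [hcoeff, hfac, coeff_pderiv']
  push_cast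
  ring

lemma fischer_self_eq_zero (H : MvPolynomial (Fin m) ℂ) (h : fischer m H H = 0) : H = 0 := by
  by_contra hne
  obtain ⟨β, hβ⟩ : H.support.Nonempty := by
    rw [Finset.nonempty_iff_ne_empty]
    intro h0
    exact hne (support_eq_empty.mp h0)
  set g : (Fin m →₀ ℕ) → ℝ := fun α => (∏ i, ((α i).factorial : ℝ)) * Complex.normSq (coeff α H)
    with hg
  have hre : fischer m H H = ((∑ α ∈ H.support, g α : ℝ) : ℂ) := by
    rw [fischer, Complex.ofReal_sum]
    apply Finset.sum_congr rfl
    intro α _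
    rw [hg]
    rw [mul_assoc, ← Complex.normSq_eq_conj_mul_self]
    push_cast
    ring
  rw [hre] at h
  have h' : (∑ α ∈ H.support, g α) = 0 := by exact_mod_cast h
  have hterms : ∀ α ∈ H.support, 0 ≤ g α := by
    intro α _
    apply mul_nonneg
    · exact Finset.prod_nonneg fun i _ => by positivity
    · exact Complex.normSq_nonneg _
  have hz := (Finset.sum_eq_zero_iff_of_nonneg hterms).mp h' β hβ
  rw [mem_support_iff] at hβ
  have hpos : 0 < g β := by
    apply mul_pos
    · exact Finset.prod_pos fun i _ => by positivity
    · exact Complex.normSq_pos.mpr hβ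
  exact absurd hz (ne_of_gt hpos)

end Fischer

section Main
variable {p q : ℕ}

lemma u2_hom : IsWeightedHomogeneous (ww p q) (u2 p q) 0 := by
  apply IsWeightedHomogeneous.sum
  intro i hi
  rw [Finset.mem_filter] at hi
  have h := (isWeightedHomogeneous_X ℂ (ww p q) i).mul (isWeightedHomogeneous_X ℂ (ww p q) i)
  have hw : ww p q i = 0 := by simp [ww]; omega
  rw [pow_two]
  simpa [hw] using h

lemma v2_hom : IsWeightedHomogeneous (ww p q) (v2 p q) 2 := by
  apply IsWeightedHomogeneous.sum
  intro i hi
  rw [Finset.mem_filter] at hi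
  have h := (isWeightedHomogeneous_X ℂ (ww p q) i).mul (isWeightedHomogeneous_X ℂ (ww p q) i)
  have hw : ww p q i = 1 := by simp [ww, hi.2]
  rw [pow_two]
  simpa [hw] using h

lemma v2_ne_zero (hq : 1 ≤ q) : v2 p q ≠ 0 := by
  intro h0
  have hp : p < p + q := by omega
  set i0 : Fin (p + q) := ⟨p, hp⟩ with hi0
  have h1 : coeff (Finsupp.single i0 2) (v2 p q) = 1 := by
    rw [v2, coeff_sum]
    have hmem : i0 ∈ univ.filter (fun i : Fin (p + q) => p ≤ (i : ℕ)) := by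
      simp [hi0]
    rw [Finset.sum_eq_single i0]
    · rw [X_pow_eq_monomial, coeff_monomial, if_pos rfl]
    · intro b _ hb
      rw [X_pow_eq_monomial, coeff_monomial, if_neg]
      intro hc
      exact hb (Finsupp.single_left_injective (by norm_num) hc)
    · intro hmem'
      exact absurd hmem hmem'
  rw [h0, coeff_zero] at h1
  exact one_ne_zero h1.symm

lemma top_comp_ne_zero {Q : MvPolynomial (Fin (p + q)) ℂ} (hQ : Q ≠ 0) :
    weightedHomogeneousComponent (ww p q) (weightedTotalDegree (ww p q) Q) Q ≠ 0 := by
  obtain ⟨d, hd, hsup⟩ := Finset.exists_mem_eq_sup Q.support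
    (Finset.nonempty_iff_ne_empty.mpr (fun h => hQ (support_eq_empty.mp h))) (fun s => Finsupp.weight (ww p q) s)
  intro h0
  have hc : coeff d (weightedHomogeneousComponent (ww p q)
      (weightedTotalDegree (ww p q) Q) Q) = coeff d Q := by
    rw [coeff_weightedHomogeneousComponent, if_pos]
    rw [weightedTotalDegree, hsup]
  rw [h0, coeff_zero] at hc
  rw [mem_support_iff] at hd
  exact hd hc.symm

lemma fischer_v2_mul (P H : MvPolynomial (Fin (p + q)) ℂ) :
    fischer (p + q) (v2 p q * P) H = fischer (p + q) P (lapV p q H) := by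
  rw [v2, Finset.sum_mul, fischer_sum_left, lapV, fischer_sum_right]
  apply Finset.sum_congr rfl
  intro i _
  rw [pow_two, mul_assoc, fischer_X_mul, fischer_X_mul]

end Main
theorem stmt7 (p q : ℕ) (hq : 1 ≤ q) (F Q : MvPolynomial (Fin (p + q)) ℂ)
    (hharm : lapV p q F = 0) (hdiv : F = r2 (p + q) * Q) : F = 0 := by
  suffices hQ : Q = 0 by rw [hdiv, hQ, mul_zero]
  by_contra hQ
  set e := weightedTotalDegree (ww p q) Q with he
  set Qe := weightedHomogeneousComponent (ww p q) e Q with hQedef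
  have hQe0 : Qe ≠ 0 := top_comp_ne_zero hQ
  have hsplit : r2 (p + q) = u2 p q + v2 p q := by
    rw [r2, u2, v2, ← Finset.sum_filter_add_sum_filter_not univ
      (fun i : Fin (p + q) => (i : ℕ) < p)]
    congr 1
    apply Finset.sum_congr _ (fun _ _ => rfl)
    apply Finset.filter_congr
    intro i _
    simp [not_lt]
  have hFtop : weightedHomogeneousComponent (ww p q) (e + 2) F = v2 p q * Qe := by
    rw [hdiv, hsplit, add_mul, map_add]
    have h1 : weightedHomogeneousComponent (ww p q) (e + 2) (u2 p q * Q) = 0 := by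
      have hc := comp_mul_hom u2_hom (e + 2) Q
      rw [Nat.add_zero] at hc
      rw [hc, weightedHomogeneousComponent_eq_zero, mul_zero]
      omega
    have h2 : weightedHomogeneousComponent (ww p q) (e + 2) (v2 p q * Q) = v2 p q * Qe := by
      exact comp_mul_hom v2_hom e Q
    rw [h1, h2, zero_add]
  have hharmtop : lapV p q (v2 p q * Qe) = 0 := by
    rw [← hFtop, lapV]
    have hcom : ∀ i ∈ univ.filter (fun i : Fin (p + q) => p ≤ (i : ℕ)),
        pderiv i (pderiv i (weightedHomogeneousComponent (ww p q) (e + 2) F)) =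
          weightedHomogeneousComponent (ww p q) e (pderiv i (pderiv i F)) := by
      intro i hi
      rw [Finset.mem_filter] at hi
      rw [show e + 2 = (e + 1) + 1 from rfl, comp_pderiv hi.2, comp_pderiv hi.2]
    rw [Finset.sum_congr rfl hcom, ← map_sum]
    have : (∑ i ∈ univ.filter (fun i : Fin (p + q) => p ≤ (i : ℕ)),
        pderiv i (pderiv i F)) = lapV p q F := rfl
    rw [this, hharm, map_zero]
  have h0 : fischer (p + q) (v2 p q * Qe) (v2 p q * Qe) = 0 := by
    rw [fischer_v2_mul, hharmtop, fischer_zero_right]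
  have hz := fischer_self_eq_zero _ h0
  rcases mul_eq_zero.mp hz with h | h
  · exact v2_ne_zero hq h
  · exact hQe0 h

end
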